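/- For every four index sets F₁, F₂, F₃, F₄, the class of partially ordered sets equipped with unary operations indexed by F₁ ∪ F₂ ∪ F₃ ∪ F₄, where each operation indexed by F₁ is order preserving, each operation indexed by F₂ is order reversing, each operation indexed by F₃ is strict order preserving, and each operation indexed by F₄ is strict order reversing, has the strong amalgamation property: given such structures A, B, C and embeddings i_A : C → A, i_B : C → B (order embeddings commuting with each indexed operation), there exist such a structure D and embeddings j_A : A → D, j_B : B → D commuting with all the indexed operations, with j_A ∘ i_A = j_B ∘ i_B and range(j_A) ∩ range(j_B) = range(j_A ∘ i_A). -/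

import Mathlib

/-- A partially ordered set equipped with four indexed families of unary operations:
order preserving ones (indexed by `F1`), order reversing ones (indexed by `F2`),
strict order preserving ones (indexed by `F3`) and strict order reversing ones
(indexed by `F4`). -/
structure PosetWithOps (F1 F2 F3 F4 : Type) where
  carrier : Type
  [ord : PartialOrder carrier]
  f1 : F1 → carrier → carrier
  f2 : F2 → carrier → carrier
  f3 : F3 → carrier → carrier
  f4 : F4 → carrier → carrier
  mono_f1 : ∀ i, Monotone (f1 i)
  anti_f2 : ∀ i, Antitone (f2 i)
  smono_f3 : ∀ i, StrictMono (f3 i)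
  santi_f4 : ∀ i, StrictAnti (f4 i)

attribute [instance] PosetWithOps.ord

namespace PWOAmalg

variable {F1 F2 F3 F4 : Type}

def ST (A B C : PosetWithOps F1 F2 F3 F4) (_iA : C.carrier ↪o A.carrier)
    (_iB : C.carrier ↪o B.carrier) : Type := A.carrier ⊕ B.carrier

variable {A B C : PosetWithOps F1 F2 F3 F4} {iA : C.carrier ↪o A.carrier}
  {iB : C.carrier ↪o B.carrier}

def sle : ST A B C iA iB → ST A B C iA iB → Prop
  | Sum.inl a, Sum.inl a' => a ≤ a'
  | Sum.inl a, Sum.inr b => ∃ c, a ≤ iA c ∧ iB c ≤ b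
  | Sum.inr b, Sum.inl a => ∃ c, b ≤ iB c ∧ iA c ≤ a
  | Sum.inr b, Sum.inr b' => b ≤ b'

instance : Preorder (ST A B C iA iB) where
  le := sle
  le_refl x := by cases x with
    | inl a => exact le_refl a
    | inr b => exact le_refl b
  le_trans x y z hxy hyz := by
    cases x with
    | inl a =>
      cases y with
      | inl a' =>
        cases z with
        | inl a'' => exact le_trans (hxy : a ≤ a') hyz
        | inr b =>
          obtain ⟨c, h1, h2⟩ := (hyz : ∃ c, a' ≤ iA c ∧ iB c ≤ b)
          exact ⟨c, le_trans (hxy : a ≤ a') h1, h2⟩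
      | inr b =>
        obtain ⟨c, h1, h2⟩ := (hxy : ∃ c, a ≤ iA c ∧ iB c ≤ b)
        cases z with
        | inl a' =>
          obtain ⟨c', h3, h4⟩ := (hyz : ∃ c', b ≤ iB c' ∧ iA c' ≤ a')
          exact le_trans (le_trans h1 (iA.le_iff_le.mpr (iB.le_iff_le.mp (le_trans h2 h3)))) h4
        | inr b' => exact ⟨c, h1, le_trans h2 (hyz : b ≤ b')⟩
    | inr b =>
      cases y with
      | inl a =>
        obtain ⟨c, h1, h2⟩ := (hxy : ∃ c, b ≤ iB c ∧ iA c ≤ a)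
        cases z with
        | inl a' => exact ⟨c, h1, le_trans h2 (hyz : a ≤ a')⟩
        | inr b' =>
          obtain ⟨c', h3, h4⟩ := (hyz : ∃ c', a ≤ iA c' ∧ iB c' ≤ b')
          exact le_trans (le_trans h1 (iB.le_iff_le.mpr (iA.le_iff_le.mp (le_trans h2 h3)))) h4
      | inr b' =>
        cases z with
        | inl a =>
          obtain ⟨c, h1, h2⟩ := (hyz : ∃ c, b' ≤ iB c ∧ iA c ≤ a)
          exact ⟨c, le_trans (hxy : b ≤ b') h1, h2⟩
        | inr b'' => exact le_trans (hxy : b ≤ b') hyz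

def inA (a : A.carrier) : ST A B C iA iB := Sum.inl a
def inB (b : B.carrier) : ST A B C iA iB := Sum.inr b

lemma inA_le_inA {a a' : A.carrier} : (inA a : ST A B C iA iB) ≤ inA a' ↔ a ≤ a' := Iff.rfl
lemma inB_le_inB {b b' : B.carrier} : (inB b : ST A B C iA iB) ≤ inB b' ↔ b ≤ b' := Iff.rfl
lemma inA_le_inB {a b} :
    (inA a : ST A B C iA iB) ≤ inB b ↔ ∃ c, a ≤ iA c ∧ iB c ≤ b := Iff.rfl
lemma inB_le_inA {a b} :
    (inB b : ST A B C iA iB) ≤ inA a ↔ ∃ c, b ≤ iB c ∧ iA c ≤ a := Iff.rfl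

section maps

variable {gA : A.carrier → A.carrier} {gB : B.carrier → B.carrier} {gC : C.carrier → C.carrier}

def smap (gA : A.carrier → A.carrier) (gB : B.carrier → B.carrier) :
    ST A B C iA iB → ST A B C iA iB := Sum.map gA gB

lemma smap_inA (a : A.carrier) : (smap gA gB (inA a) : ST A B C iA iB) = inA (gA a) := rfl
lemma smap_inB (b : B.carrier) : (smap gA gB (inB b) : ST A B C iA iB) = inB (gB b) := rfl

lemma eq_of_smono {α β : Type} [PartialOrder α] [Preorder β] {g : α → β}
    (hg : StrictMono g) {x y : α} (hxy : x ≤ y) (he : g x = g y) : x = y :=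
  hxy.lt_or_eq.elim (fun h => absurd he (hg h).ne) id

lemma eq_of_santi {α β : Type} [PartialOrder α] [Preorder β] {g : α → β}
    (hg : StrictAnti g) {x y : α} (hxy : x ≤ y) (he : g x = g y) : x = y :=
  hxy.lt_or_eq.elim (fun h => absurd he (hg h).ne') id

lemma smap_mono (gC : C.carrier → C.carrier)
    (h1 : ∀ c, iA (gC c) = gA (iA c)) (h2 : ∀ c, iB (gC c) = gB (iB c)) (hgA : Monotone gA) (hgB : Monotone gB)
    {x y : ST A B C iA iB} (h : x ≤ y) : smap gA gB x ≤ smap gA gB y := by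
  cases x with
  | inl a =>
    cases y with
    | inl a' => exact hgA (h : a ≤ a')
    | inr b =>
      obtain ⟨c, hc1, hc2⟩ := (h : ∃ c, a ≤ iA c ∧ iB c ≤ b)
      exact ⟨gC c, by rw [h1]; exact hgA hc1, by rw [h2]; exact hgB hc2⟩
  | inr b =>
    cases y with
    | inl a =>
      obtain ⟨c, hc1, hc2⟩ := (h : ∃ c, b ≤ iB c ∧ iA c ≤ a)
      exact ⟨gC c, by rw [h2]; exact hgB hc1, by rw [h1]; exact hgA hc2⟩
    | inr b' => exact hgB (h : b ≤ b')

lemma smap_anti (gC : C.carrier → C.carrier)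
    (h1 : ∀ c, iA (gC c) = gA (iA c)) (h2 : ∀ c, iB (gC c) = gB (iB c)) (hgA : Antitone gA) (hgB : Antitone gB)
    {x y : ST A B C iA iB} (h : x ≤ y) : smap gA gB y ≤ smap gA gB x := by
  cases x with
  | inl a =>
    cases y with
    | inl a' => exact hgA (h : a ≤ a')
    | inr b =>
      obtain ⟨c, hc1, hc2⟩ := (h : ∃ c, a ≤ iA c ∧ iB c ≤ b)
      exact ⟨gC c, by rw [h2]; exact hgB hc2, by rw [h1]; exact hgA hc1⟩
  | inr b =>
    cases y with
    | inl a =>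
      obtain ⟨c, hc1, hc2⟩ := (h : ∃ c, b ≤ iB c ∧ iA c ≤ a)
      exact ⟨gC c, by rw [h1]; exact hgA hc2, by rw [h2]; exact hgB hc1⟩
    | inr b' => exact hgB (h : b ≤ b')

lemma smap_smono (gC : C.carrier → C.carrier)
    (h1 : ∀ c, iA (gC c) = gA (iA c)) (h2 : ∀ c, iB (gC c) = gB (iB c)) (hgA : StrictMono gA) (hgB : StrictMono gB)
    {x y : ST A B C iA iB} (h : x ≤ y) (hn : ¬ y ≤ x) : ¬ smap gA gB y ≤ smap gA gB x := by
  cases x with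
  | inl a =>
    cases y with
    | inl a' => exact (hgA (lt_of_le_not_ge (h : a ≤ a') hn)).not_ge
    | inr b =>
      obtain ⟨c, hc1, hc2⟩ := (h : ∃ c, a ≤ iA c ∧ iB c ≤ b)
      rintro (⟨c', k1, k2⟩ : ∃ c', gB b ≤ iB c' ∧ iA c' ≤ gA a)
      have e1 : gC c ≤ c' := iB.le_iff_le.mp (((h2 c).le.trans (hgB.monotone hc2)).trans k1)
      have e2 : c' ≤ gC c := iA.le_iff_le.mp (k2.trans ((hgA.monotone hc1).trans (h1 c).ge))
      have ec : c' = gC c := le_antisymm e2 e1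
      rw [ec, h1] at k2
      rw [ec, h2] at k1
      have ea : a = iA c := eq_of_smono hgA hc1 (le_antisymm (hgA.monotone hc1) k2)
      have eb : iB c = b := eq_of_smono hgB hc2 (le_antisymm (hgB.monotone hc2) k1)
      exact hn ⟨c, eb.ge, ea.ge⟩
  | inr b =>
    cases y with
    | inl a =>
      obtain ⟨c, hc1, hc2⟩ := (h : ∃ c, b ≤ iB c ∧ iA c ≤ a)
      rintro (⟨c', k1, k2⟩ : ∃ c', gA a ≤ iA c' ∧ iB c' ≤ gB b)
      have e1 : gC c ≤ c' := iA.le_iff_le.mp (((h1 c).le.trans (hgA.monotone hc2)).trans k1)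
      have e2 : c' ≤ gC c := iB.le_iff_le.mp (k2.trans ((hgB.monotone hc1).trans (h2 c).ge))
      have ec : c' = gC c := le_antisymm e2 e1
      rw [ec, h1] at k1
      rw [ec, h2] at k2
      have ea : iA c = a := eq_of_smono hgA hc2 (le_antisymm (hgA.monotone hc2) k1)
      have eb : b = iB c := eq_of_smono hgB hc1 (le_antisymm (hgB.monotone hc1) k2)
      exact hn ⟨c, ea.ge, eb.ge⟩
    | inr b' => exact (hgB (lt_of_le_not_ge (h : b ≤ b') hn)).not_ge

lemma smap_santi (gC : C.carrier → C.carrier)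
    (h1 : ∀ c, iA (gC c) = gA (iA c)) (h2 : ∀ c, iB (gC c) = gB (iB c)) (hgA : StrictAnti gA) (hgB : StrictAnti gB)
    {x y : ST A B C iA iB} (h : x ≤ y) (hn : ¬ y ≤ x) : ¬ smap gA gB x ≤ smap gA gB y := by
  cases x with
  | inl a =>
    cases y with
    | inl a' => exact (hgA (lt_of_le_not_ge (h : a ≤ a') hn)).not_ge
    | inr b =>
      obtain ⟨c, hc1, hc2⟩ := (h : ∃ c, a ≤ iA c ∧ iB c ≤ b)
      rintro (⟨c', k1, k2⟩ : ∃ c', gA a ≤ iA c' ∧ iB c' ≤ gB b)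
      have e1 : gC c ≤ c' := iA.le_iff_le.mp (((h1 c).le.trans (hgA.antitone hc1)).trans k1)
      have e2 : c' ≤ gC c := iB.le_iff_le.mp (k2.trans ((hgB.antitone hc2).trans (h2 c).ge))
      have ec : c' = gC c := le_antisymm e2 e1
      rw [ec, h1] at k1
      rw [ec, h2] at k2
      have ea : a = iA c := eq_of_santi hgA hc1 (le_antisymm k1 (hgA.antitone hc1))
      have eb : iB c = b := eq_of_santi hgB hc2 (le_antisymm k2 (hgB.antitone hc2))
      exact hn ⟨c, eb.ge, ea.ge⟩
  | inr b =>
    cases y with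
    | inl a =>
      obtain ⟨c, hc1, hc2⟩ := (h : ∃ c, b ≤ iB c ∧ iA c ≤ a)
      rintro (⟨c', k1, k2⟩ : ∃ c', gB b ≤ iB c' ∧ iA c' ≤ gA a)
      have e1 : gC c ≤ c' := iB.le_iff_le.mp (((h2 c).le.trans (hgB.antitone hc1)).trans k1)
      have e2 : c' ≤ gC c := iA.le_iff_le.mp (k2.trans ((hgA.antitone hc2).trans (h1 c).ge))
      have ec : c' = gC c := le_antisymm e2 e1
      rw [ec, h1] at k2
      rw [ec, h2] at k1
      have ea : iA c = a := eq_of_santi hgA hc2 (le_antisymm k2 (hgA.antitone hc2))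
      have eb : b = iB c := eq_of_santi hgB hc1 (le_antisymm k1 (hgB.antitone hc1))
      exact hn ⟨c, ea.ge, eb.ge⟩
    | inr b' => exact (hgB (lt_of_le_not_ge (h : b ≤ b') hn)).not_ge

end maps

abbrev DT (A B C : PosetWithOps F1 F2 F3 F4) (iA : C.carrier ↪o A.carrier)
    (iB : C.carrier ↪o B.carrier) : Type := Antisymmetrization (ST A B C iA iB) (· ≤ ·)

def dmk (x : ST A B C iA iB) : DT A B C iA iB := toAntisymmetrization _ x

lemma dmk_le_dmk {x y : ST A B C iA iB} : (dmk x : DT A B C iA iB) ≤ dmk y ↔ x ≤ y := Iff.rfl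

lemma dmk_eq_dmk {x y : ST A B C iA iB} :
    (dmk x : DT A B C iA iB) = dmk y ↔ AntisymmRel (· ≤ ·) x y :=
  ⟨fun h => Quotient.exact h, fun h => Quotient.sound h⟩

def dmap (gA : A.carrier → A.carrier) (gB : B.carrier → B.carrier)
    (h : ∀ x y : ST A B C iA iB,
      AntisymmRel (· ≤ ·) x y → AntisymmRel (· ≤ ·) (smap gA gB x) (smap gA gB y)) :
    DT A B C iA iB → DT A B C iA iB :=
  Quotient.map (smap gA gB) h

lemma dmap_dmk (gA : A.carrier → A.carrier) (gB : B.carrier → B.carrier)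
    (h : ∀ x y : ST A B C iA iB,
      AntisymmRel (· ≤ ·) x y → AntisymmRel (· ≤ ·) (smap gA gB x) (smap gA gB y))
    (x : ST A B C iA iB) : dmap gA gB h (dmk x) = dmk (smap gA gB x) := rfl

lemma dmap_monotone {gA gB} (h) (hm : ∀ {x y : ST A B C iA iB}, x ≤ y → smap gA gB x ≤ smap gA gB y) :
    Monotone (dmap (iA := iA) (iB := iB) gA gB h) := by
  intro x y hxy
  induction x using Antisymmetrization.ind
  induction y using Antisymmetrization.ind
  exact hm hxy

lemma dmap_antitone {gA gB} (h) (hm : ∀ {x y : ST A B C iA iB}, x ≤ y → smap gA gB y ≤ smap gA gB x) :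
    Antitone (dmap (iA := iA) (iB := iB) gA gB h) := by
  intro x y hxy
  induction x using Antisymmetrization.ind
  induction y using Antisymmetrization.ind
  exact hm hxy

lemma dmap_strictMono {gA gB} (h)
    (hm : ∀ {x y : ST A B C iA iB}, x ≤ y → smap gA gB x ≤ smap gA gB y)
    (hs : ∀ {x y : ST A B C iA iB}, x ≤ y → ¬ y ≤ x → ¬ smap gA gB y ≤ smap gA gB x) :
    StrictMono (dmap (iA := iA) (iB := iB) gA gB h) := by
  intro x y hxy
  induction x using Antisymmetrization.ind
  induction y using Antisymmetrization.ind
  rw [lt_iff_le_not_ge] at hxy ⊢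
  exact ⟨hm hxy.1, hs hxy.1 hxy.2⟩

lemma dmap_strictAnti {gA gB} (h)
    (hm : ∀ {x y : ST A B C iA iB}, x ≤ y → smap gA gB y ≤ smap gA gB x)
    (hs : ∀ {x y : ST A B C iA iB}, x ≤ y → ¬ y ≤ x → ¬ smap gA gB x ≤ smap gA gB y) :
    StrictAnti (dmap (iA := iA) (iB := iB) gA gB h) := by
  intro x y hxy
  induction x using Antisymmetrization.ind
  induction y using Antisymmetrization.ind
  rw [lt_iff_le_not_ge] at hxy ⊢
  exact ⟨hm hxy.1, hs hxy.1 hxy.2⟩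

end PWOAmalg

open PWOAmalg

/-- The class of posets with any number of order preserving, order reversing,
strict order preserving and strict order reversing unary operations has the
strong amalgamation property. -/
theorem posets_with_ops_strong_amalgamation (F1 F2 F3 F4 : Type)
    (A B C : PosetWithOps F1 F2 F3 F4)
    (iA : C.carrier ↪o A.carrier) (iB : C.carrier ↪o B.carrier)
    (hA1 : ∀ i c, iA (C.f1 i c) = A.f1 i (iA c))
    (hA2 : ∀ i c, iA (C.f2 i c) = A.f2 i (iA c))
    (hA3 : ∀ i c, iA (C.f3 i c) = A.f3 i (iA c))
    (hA4 : ∀ i c, iA (C.f4 i c) = A.f4 i (iA c))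
    (hB1 : ∀ i c, iB (C.f1 i c) = B.f1 i (iB c))
    (hB2 : ∀ i c, iB (C.f2 i c) = B.f2 i (iB c))
    (hB3 : ∀ i c, iB (C.f3 i c) = B.f3 i (iB c))
    (hB4 : ∀ i c, iB (C.f4 i c) = B.f4 i (iB c)) :
    ∃ (D : PosetWithOps F1 F2 F3 F4) (jA : A.carrier ↪o D.carrier)
      (jB : B.carrier ↪o D.carrier),
      (∀ i a, jA (A.f1 i a) = D.f1 i (jA a)) ∧
      (∀ i a, jA (A.f2 i a) = D.f2 i (jA a)) ∧
      (∀ i a, jA (A.f3 i a) = D.f3 i (jA a)) ∧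
      (∀ i a, jA (A.f4 i a) = D.f4 i (jA a)) ∧
      (∀ i b, jB (B.f1 i b) = D.f1 i (jB b)) ∧
      (∀ i b, jB (B.f2 i b) = D.f2 i (jB b)) ∧
      (∀ i b, jB (B.f3 i b) = D.f3 i (jB b)) ∧
      (∀ i b, jB (B.f4 i b) = D.f4 i (jB b)) ∧
      (∀ c, jA (iA c) = jB (iB c)) ∧
      Set.range jA ∩ Set.range jB = Set.range (fun c => jA (iA c)) := by
  classical
  have m1 : ∀ i {x y : ST A B C iA iB}, x ≤ y →
      smap (A.f1 i) (B.f1 i) x ≤ smap (A.f1 i) (B.f1 i) y :=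
    fun i => smap_mono (C.f1 i) (hA1 i) (hB1 i) (A.mono_f1 i) (B.mono_f1 i)
  have m2 : ∀ i {x y : ST A B C iA iB}, x ≤ y →
      smap (A.f2 i) (B.f2 i) y ≤ smap (A.f2 i) (B.f2 i) x :=
    fun i => smap_anti (C.f2 i) (hA2 i) (hB2 i) (A.anti_f2 i) (B.anti_f2 i)
  have m3 : ∀ i {x y : ST A B C iA iB}, x ≤ y →
      smap (A.f3 i) (B.f3 i) x ≤ smap (A.f3 i) (B.f3 i) y :=
    fun i => smap_mono (C.f3 i) (hA3 i) (hB3 i) (A.smono_f3 i).monotone (B.smono_f3 i).monotone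
  have m4 : ∀ i {x y : ST A B C iA iB}, x ≤ y →
      smap (A.f4 i) (B.f4 i) y ≤ smap (A.f4 i) (B.f4 i) x :=
    fun i => smap_anti (C.f4 i) (hA4 i) (hB4 i) (A.santi_f4 i).antitone (B.santi_f4 i).antitone
  have p1 : ∀ i (x y : ST A B C iA iB), AntisymmRel (· ≤ ·) x y →
      AntisymmRel (· ≤ ·) (smap (A.f1 i) (B.f1 i) x) (smap (A.f1 i) (B.f1 i) y) :=
    fun i x y h => ⟨m1 i h.1, m1 i h.2⟩
  have p2 : ∀ i (x y : ST A B C iA iB), AntisymmRel (· ≤ ·) x y →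
      AntisymmRel (· ≤ ·) (smap (A.f2 i) (B.f2 i) x) (smap (A.f2 i) (B.f2 i) y) :=
    fun i x y h => ⟨m2 i h.2, m2 i h.1⟩
  have p3 : ∀ i (x y : ST A B C iA iB), AntisymmRel (· ≤ ·) x y →
      AntisymmRel (· ≤ ·) (smap (A.f3 i) (B.f3 i) x) (smap (A.f3 i) (B.f3 i) y) :=
    fun i x y h => ⟨m3 i h.1, m3 i h.2⟩
  have p4 : ∀ i (x y : ST A B C iA iB), AntisymmRel (· ≤ ·) x y →
      AntisymmRel (· ≤ ·) (smap (A.f4 i) (B.f4 i) x) (smap (A.f4 i) (B.f4 i) y) :=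
    fun i x y h => ⟨m4 i h.2, m4 i h.1⟩
  refine ⟨{ carrier := DT A B C iA iB
            f1 := fun i => dmap _ _ (p1 i)
            f2 := fun i => dmap _ _ (p2 i)
            f3 := fun i => dmap _ _ (p3 i)
            f4 := fun i => dmap _ _ (p4 i)
            mono_f1 := fun i => dmap_monotone (p1 i) (m1 i)
            anti_f2 := fun i => dmap_antitone (p2 i) (m2 i)
            smono_f3 := fun i => dmap_strictMono (p3 i) (m3 i)
              (smap_smono (C.f3 i) (hA3 i) (hB3 i) (A.smono_f3 i) (B.smono_f3 i))
            santi_f4 := fun i => dmap_strictAnti (p4 i) (m4 i)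
              (smap_santi (C.f4 i) (hA4 i) (hB4 i) (A.santi_f4 i) (B.santi_f4 i)) },
    OrderEmbedding.ofMapLEIff (fun a => dmk (inA a)) (fun _ _ => Iff.rfl),
    OrderEmbedding.ofMapLEIff (fun b => dmk (inB b)) (fun _ _ => Iff.rfl),
    fun i a => rfl, fun i a => rfl, fun i a => rfl, fun i a => rfl,
    fun i b => rfl, fun i b => rfl, fun i b => rfl, fun i b => rfl,
    fun c => Quotient.sound ⟨⟨c, le_refl _, le_refl _⟩, ⟨c, le_refl _, le_refl _⟩⟩,
    ?_⟩
  ext x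
  simp only [Set.mem_inter_iff, Set.mem_range]
  constructor
  · rintro ⟨⟨a, rfl⟩, ⟨b, hb⟩⟩
    have h : AntisymmRel (α := ST A B C iA iB) (· ≤ ·) (inB b) (inA a) := Quotient.exact hb
    obtain ⟨⟨c1, hb1, ha1⟩, ⟨c2, ha2, hb2⟩⟩ := h
    have hc : c1 = c2 :=
      le_antisymm (iA.le_iff_le.mp (ha1.trans ha2)) (iB.le_iff_le.mp (hb2.trans hb1))
    have ha : iA c1 = a := le_antisymm ha1 (by rw [hc]; exact ha2)
    exact ⟨c1, by rw [ha]⟩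
  · rintro ⟨c, rfl⟩
    refine ⟨⟨iA c, rfl⟩, ⟨iB c, ?_⟩⟩
    exact Quotient.sound ⟨⟨c, le_refl _, le_refl _⟩, ⟨c, le_refl _, le_refl _⟩⟩
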